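/- Every full binary tree with minimal Colless index also has minimal Sackin index: if T is a full binary tree with n leaves and C(T) = c(n), then S(T) equals the minimum of S(T') over all full binary trees T' with n leaves. -/
import Mathlib


/-- Full binary trees: either a single leaf, or a node with two full binary subtrees. -/
inductive FBT : Type
  | leaf : FBT
  | node : FBT → FBT → FBT

namespace FBT

/-- Number of leaves of a full binary tree. -/
def leaves : FBT → ℕ
  | leaf => 1
  | node a b => leaves a + leaves b

/-- The Colless index: the sum over internal nodes of the absolute difference of the
numbers of leaves of the two maximal pending subtrees. -/
def colless : FBT → ℕ
  | leaf => 0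
  | node a b => colless a + colless b + Nat.dist (leaves a) (leaves b)

end FBT

/-- The minimal Colless index over all full binary trees with `n` leaves. -/
noncomputable def minColless (n : ℕ) : ℕ :=
  sInf {m : ℕ | ∃ T : FBT, T.leaves = n ∧ T.colless = m}

namespace FBT

/-- The Sackin index: the sum over internal nodes of the number of leaves of the
subtree rooted at that node. -/
def sackin : FBT → ℕ
  | leaf => 0
  | node a b => sackin a + sackin b + (leaves a + leaves b)

end FBT

/-- The minimal Sackin index over all full binary trees with `n` leaves. -/
noncomputable def minSackin (n : ℕ) : ℕ :=
  sInf {m : ℕ | ∃ T : FBT, T.leaves = n ∧ T.sackin = m}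

/-! ### Auxiliary development -/

/-- Colless index of the maximally balanced tree, defined by the balanced recursion. -/
def Cm : ℕ → ℕ
  | 0 => 0
  | 1 => 0
  | n+2 => Cm ((n+2)/2) + Cm ((n+3)/2) + (n+2) % 2
decreasing_by all_goals omega

/-- Sackin index of the maximally balanced tree, defined by the balanced recursion. -/
def Sm : ℕ → ℕ
  | 0 => 0
  | 1 => 0
  | n+2 => Sm ((n+2)/2) + Sm ((n+3)/2) + (n+2)
decreasing_by all_goals omega

lemma Cm_rec (n : ℕ) (h : 2 ≤ n) : Cm n = Cm (n/2) + Cm ((n+1)/2) + n % 2 := by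
  obtain ⟨m, rfl⟩ : ∃ m, n = m + 2 := ⟨n - 2, by omega⟩
  rw [Cm]

lemma Sm_rec (n : ℕ) (h : 2 ≤ n) : Sm n = Sm (n/2) + Sm ((n+1)/2) + n := by
  obtain ⟨m, rfl⟩ : ∃ m, n = m + 2 := ⟨n - 2, by omega⟩
  rw [Sm]

lemma Cm_one : Cm 1 = 0 := by rw [Cm]
lemma Sm_one : Sm 1 = 0 := by rw [Sm]

lemma Cm_even (x : ℕ) (hx : 1 ≤ x) : Cm (2*x) = 2 * Cm x := by
  rw [Cm_rec (2*x) (by omega)]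
  have h1 : 2*x/2 = x := by omega
  have h2 : (2*x+1)/2 = x := by omega
  have h3 : (2*x) % 2 = 0 := by omega
  rw [h1, h2, h3]; ring

lemma Cm_odd (x : ℕ) (hx : 1 ≤ x) : Cm (2*x+1) = Cm x + Cm (x+1) + 1 := by
  rw [Cm_rec (2*x+1) (by omega)]
  have h1 : (2*x+1)/2 = x := by omega
  have h2 : (2*x+1+1)/2 = x+1 := by omega
  have h3 : (2*x+1) % 2 = 1 := by omega
  rw [h1, h2, h3]

lemma Sm_even (x : ℕ) (hx : 1 ≤ x) : Sm (2*x) = 2 * Sm x + 2*x := by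
  rw [Sm_rec (2*x) (by omega)]
  have h1 : 2*x/2 = x := by omega
  have h2 : (2*x+1)/2 = x := by omega
  rw [h1, h2]; ring

lemma Sm_odd (x : ℕ) (hx : 1 ≤ x) : Sm (2*x+1) = Sm x + Sm (x+1) + (2*x+1) := by
  rw [Sm_rec (2*x+1) (by omega)]
  have h1 : (2*x+1)/2 = x := by omega
  have h2 : (2*x+1+1)/2 = x+1 := by omega
  rw [h1, h2]

/-! ### Logarithm lemmas -/

lemma log2_pow_le (x : ℕ) (hx : x ≠ 0) : 2 ^ Nat.log 2 x ≤ x := Nat.pow_log_le_self 2 hx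
lemma log2_lt_pow (x : ℕ) : x < 2 ^ (Nat.log 2 x + 1) := Nat.lt_pow_succ_log_self (by norm_num) x

lemma log2_two_mul (x : ℕ) (hx : 1 ≤ x) : Nat.log 2 (2*x) = Nat.log 2 x + 1 := by
  apply Nat.log_eq_of_pow_le_of_lt_pow
  · have := log2_pow_le x (by omega); rw [pow_succ]; omega
  · have := log2_lt_pow x
    rw [pow_succ (2:ℕ) (Nat.log 2 x + 1)]; omega

lemma log2_odd (x : ℕ) (hx : 1 ≤ x) : Nat.log 2 (2*x+1) = Nat.log 2 x + 1 := by
  apply Nat.log_eq_of_pow_le_of_lt_pow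
  · have := log2_pow_le x (by omega); rw [pow_succ]; omega
  · have := log2_lt_pow x
    rw [pow_succ (2:ℕ) (Nat.log 2 x + 1)]; omega

/-- Closed form: Sm n = n(log n + 2) - 2^(log n + 1), in additive form. -/
lemma Sm_val : ∀ n : ℕ, 1 ≤ n → Sm n + 2 ^ (Nat.log 2 n + 1) = n * (Nat.log 2 n + 2) := by
  intro n
  induction n using Nat.strong_induction_on with
  | _ n IH =>
    intro hn
    match n, hn with
    | 1, _ => simp [Sm_one]
    | (n+2), _ =>
      rcases Nat.even_or_odd (n+2) with ⟨x, hx⟩ | ⟨x, hx⟩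
      · -- n+2 = 2x, x ≥ 1
        have hx1 : 1 ≤ x := by omega
        have e : n + 2 = 2 * x := by omega
        rw [e, Sm_even x hx1, log2_two_mul x hx1]
        have h1 := IH x (by omega) hx1
        set i := Nat.log 2 x with hi
        have hkey : 2*x*(i+1+2) = 2*(x*(i+2)) + 2*x := by ring
        have hp : (2:ℕ)^(i+1+1) = 2*2^(i+1) := by ring
        rw [hp, hkey, ← h1]; ring
      · -- n+2 = 2x+1, x ≥ 1
        have hx1 : 1 ≤ x := by omega
        have e : n + 2 = 2 * x + 1 := by omega
        rw [e, Sm_odd x hx1, log2_odd x hx1]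
        have h1 := IH x (by omega) hx1
        have h2 := IH (x+1) (by omega) (by omega)
        set i := Nat.log 2 x with hi
        have hxu : x < 2^(i+1) := log2_lt_pow x
        have hxl : 2^i ≤ x := log2_pow_le x (by omega)
        rcases eq_or_lt_of_le (show x + 1 ≤ 2^(i+1) by omega) with heq | hlt
        · -- x+1 = 2^(i+1), log(x+1) = i+1
          have hl1 : Nat.log 2 (x+1) = i+1 := by rw [heq, Nat.log_pow (by norm_num)]
          rw [hl1] at h2
          have hp : (2:ℕ)^(i+1+1) = 2*(x+1) := by rw [pow_succ, ← heq]; ring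
          rw [hp] at h2 ⊢
          rw [← heq] at h1
          have hkey : x*(i+2) + (x+1)*(i+1+2) + (2*x+1) = (2*x+1)*(i+1+2) + (x+1) := by ring
          linarith [h1, h2, hkey]
        · -- x+1 < 2^(i+1): log(x+1) = i
          have hl1 : Nat.log 2 (x+1) = i := by
            apply Nat.log_eq_of_pow_le_of_lt_pow (by omega) hlt
          rw [hl1] at h2
          have hkey : x*(i+2) + (x+1)*(i+2) + (2*x+1) = (2*x+1)*(i+1+2) := by ring
          have hp : (2:ℕ)^(i+1+1) = 2^(i+1) + 2^(i+1) := by ring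
          rw [hp]
          linarith [h1, h2, hkey]

/-! ### Superadditivity of Sm -/

lemma G1 (a i k : ℕ) (ha : a < 2^(i+1)) (h : i < k) :
    a*(k+1) + 2^(i+1) ≤ a*(i+2) + 2^k := by
  induction k with
  | zero => omega
  | succ k ih =>
    rcases Nat.lt_or_ge i k with hik | hik
    · have hk := ih hik
      have h2 : a ≤ 2^k := le_of_lt (lt_of_lt_of_le ha
        (Nat.pow_le_pow_right (by norm_num) (by omega)))
      have e0 : a*(k+1+1) = a*(k+1) + a := by ring
      have e1 : (2:ℕ)^(k+1) = 2^k + 2^k := by ring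
      linarith
    · have hik' : i = k := by omega
      subst hik'
      have e0 : a*(i+1+1) = a*(i+2) := by ring
      linarith

lemma superadd_S_le (a b : ℕ) (ha : 1 ≤ a) (hb : 1 ≤ b) (hab : a ≤ b) :
    Sm (a+b) ≤ Sm a + Sm b + (a+b) := by
  have hSa := Sm_val a ha
  have hSb := Sm_val b hb
  have hSn := Sm_val (a+b) (by omega)
  have hau : a < 2^(Nat.log 2 a+1) := log2_lt_pow a
  have hal : 2^(Nat.log 2 a) ≤ a := log2_pow_le a (by omega)
  have hbu : b < 2^(Nat.log 2 b+1) := log2_lt_pow b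
  have hbl : 2^(Nat.log 2 b) ≤ b := log2_pow_le b (by omega)
  have hnu : a+b < 2^(Nat.log 2 (a+b)+1) := log2_lt_pow (a+b)
  have hnl : 2^(Nat.log 2 (a+b)) ≤ a+b := log2_pow_le (a+b) (by omega)
  have hij : Nat.log 2 a ≤ Nat.log 2 b := Nat.log_mono_right hab
  have hjk : Nat.log 2 b ≤ Nat.log 2 (a+b) := Nat.log_mono_right (by omega)
  generalize hI : Nat.log 2 a = i at *
  generalize hJ : Nat.log 2 b = j at *
  generalize hK : Nat.log 2 (a+b) = k at *
  have hkj : k ≤ j + 1 := by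
    by_contra hc
    push_neg at hc
    have h1 : 2^(j+2) ≤ 2^k := Nat.pow_le_pow_right (by norm_num) (by omega)
    have h2 : (2:ℕ)^(j+2) = 2*2^(j+1) := by ring
    omega
  rcases Nat.eq_or_lt_of_le hjk with hjk' | hjk'
  · -- j = k : b ≥ 2^k
    subst hjk'
    have hik : i < j := by
      rcases Nat.lt_or_ge i j with h | h
      · exact h
      · exfalso
        have hji : j = i := by omega
        subst hji
        have h3 : (2:ℕ)^(j+1) = 2^j + 2^j := by ring
        omega
    have hG := G1 a i j hau hik
    have e1 : (a+b)*(j+2) = a*(j+1) + a + b*(j+2) := by ring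
    linarith
  · -- k = j+1
    have hkj' : k = j + 1 := by omega
    subst hkj'
    have hik : i < j + 1 := by omega
    have hG := G1 a i (j+1) hau hik
    have e1 : (a+b)*(j+1+2) = a*(j+1+1) + a + b*(j+2) + b := by ring
    have e2 : (2:ℕ)^(j+1+1) = 2^(j+1) + 2^(j+1) := by ring
    linarith

lemma superadd_S (a b : ℕ) (ha : 1 ≤ a) (hb : 1 ≤ b) :
    Sm (a+b) ≤ Sm a + Sm b + (a+b) := by
  rcases le_total a b with h | h
  · exact superadd_S_le a b ha hb h
  · have := superadd_S_le b a hb ha h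
    rw [Nat.add_comm b a] at this
    omega

/-! ### Increment lemma and master inequality -/

lemma Cm_two : Cm 2 = 0 := by
  have := Cm_even 1 (le_refl 1); simpa [Cm_one] using this
lemma Sm_two : Sm 2 = 2 := by
  have := Sm_even 1 (le_refl 1); simpa [Sm_one] using this

/-- increment lemma: C(a+1) + S(a) + 2 ≤ C(a) + S(a+1) for a ≥ 1 -/
lemma inc : ∀ a : ℕ, 1 ≤ a → Cm (a+1) + Sm a + 2 ≤ Cm a + Sm (a+1) := by
  intro a
  induction a using Nat.strong_induction_on with
  | _ a IH =>
    intro ha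
    rcases Nat.lt_or_ge a 2 with ha2 | ha2
    · have : a = 1 := by omega
      subst this
      simp [Cm_one, Sm_one, Cm_two, Sm_two]
    · rcases Nat.even_or_odd a with ⟨x, hx⟩ | ⟨x, hx⟩
      · have hx1 : 1 ≤ x := by omega
        have e : a = 2*x := by omega
        subst e
        rw [Cm_odd x hx1, Sm_even x hx1, Cm_even x hx1, Sm_odd x hx1]
        have := IH x (by omega) hx1
        omega
      · have hx1 : 1 ≤ x := by omega
        have e : a = 2*x+1 := by omega
        subst e
        have e1 : 2*x+1+1 = 2*(x+1) := by ring
        rw [e1, Cm_even (x+1) (by omega), Sm_odd x hx1, Cm_odd x hx1,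
          Sm_even (x+1) (by omega)]
        have := IH x (by omega) hx1
        omega

lemma base1 (a : ℕ) (ha : 1 ≤ a) :
    Cm (a+1) + Sm a + (a+1) ≤ Cm a + (a-1) + Sm (a+1) := by
  have := inc a ha
  omega

/-- Master inequality -/
lemma M : ∀ n a b : ℕ, a + b = n → 1 ≤ a → 1 ≤ b →
    Cm (a+b) + Sm a + Sm b + (a+b) ≤ Cm a + Cm b + ((a-b)+(b-a)) + Sm (a+b) := by
  intro n
  induction n using Nat.strong_induction_on with
  | _ n IH =>
    intro a b hab ha hb
    rcases Nat.eq_or_lt_of_le hb with hb1 | hb1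
    · have hb1' : b = 1 := hb1.symm
      subst hb1'
      have := base1 a ha
      simp only [Cm_one, Sm_one]
      omega
    · rcases Nat.eq_or_lt_of_le ha with ha1 | ha1
      · have ha1' : a = 1 := ha1.symm
        subst ha1'
        have := base1 b hb
        simp only [Cm_one, Sm_one]
        have e : 1 + b = b + 1 := by omega
        rw [e]
        omega
      · rcases Nat.even_or_odd a with ⟨x, hx⟩ | ⟨x, hx⟩ <;>
          rcases Nat.even_or_odd b with ⟨y, hy⟩ | ⟨y, hy⟩
        · have hx1 : 1 ≤ x := by omega
          have hy1 : 1 ≤ y := by omega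
          have ea : a = 2*x := by omega
          have eb : b = 2*y := by omega
          subst ea; subst eb
          have en : 2*x + 2*y = 2*(x+y) := by ring
          rw [en, Cm_even x hx1, Cm_even y hy1, Sm_even x hx1, Sm_even y hy1,
            Cm_even (x+y) (by omega), Sm_even (x+y) (by omega)]
          have := IH (x+y) (by omega) x y rfl hx1 hy1
          omega
        · have hx1 : 1 ≤ x := by omega
          have hy1 : 1 ≤ y := by omega
          have ea : a = 2*x := by omega
          have eb : b = 2*y+1 := by omega
          subst ea; subst eb
          have en : 2*x + (2*y+1) = 2*(x+y)+1 := by ring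
          rw [en, Cm_even x hx1, Cm_odd y hy1, Sm_even x hx1, Sm_odd y hy1,
            Cm_odd (x+y) (by omega), Sm_odd (x+y) (by omega)]
          have h1 := IH (x+y) (by omega) x y rfl hx1 hy1
          have h2 := IH (x+y+1) (by omega) x (y+1) (by omega) hx1 (by omega)
          have e2 : x + (y+1) = x+y+1 := by omega
          rw [e2] at h2
          omega
        · have hx1 : 1 ≤ x := by omega
          have hy1 : 1 ≤ y := by omega
          have ea : a = 2*x+1 := by omega
          have eb : b = 2*y := by omega
          subst ea; subst eb
          have en : (2*x+1) + 2*y = 2*(x+y)+1 := by ring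
          rw [en, Cm_odd x hx1, Cm_even y hy1, Sm_odd x hx1, Sm_even y hy1,
            Cm_odd (x+y) (by omega), Sm_odd (x+y) (by omega)]
          have h1 := IH (x+y) (by omega) x y rfl hx1 hy1
          have h2 := IH (x+y+1) (by omega) (x+1) y (by omega) (by omega) hy1
          have e2 : x + 1 + y = x+y+1 := by omega
          rw [e2] at h2
          omega
        · have hx1 : 1 ≤ x := by omega
          have hy1 : 1 ≤ y := by omega
          have ea : a = 2*x+1 := by omega
          have eb : b = 2*y+1 := by omega
          subst ea; subst eb
          have en : (2*x+1) + (2*y+1) = 2*(x+y+1) := by ring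
          rw [en, Cm_odd x hx1, Cm_odd y hy1, Sm_odd x hx1, Sm_odd y hy1,
            Cm_even (x+y+1) (by omega), Sm_even (x+y+1) (by omega)]
          have h1 := IH (x+y+1) (by omega) x (y+1) (by omega) hx1 (by omega)
          have h2 := IH (x+y+1) (by omega) (x+1) y (by omega) (by omega) hy1
          have e2 : x + (y+1) = x+y+1 := by omega
          have e3 : x + 1 + y = x+y+1 := by omega
          rw [e2] at h1
          rw [e3] at h2
          omega

lemma dist_eq_aux (a b : ℕ) : Nat.dist a b = (a - b) + (b - a) := rfl

lemma superadd_C (a b : ℕ) (ha : 1 ≤ a) (hb : 1 ≤ b) :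
    Cm (a+b) ≤ Cm a + Cm b + Nat.dist a b := by
  have hm := M (a+b) a b rfl ha hb
  have hs := superadd_S a b ha hb
  rw [dist_eq_aux]
  omega

/-! ### Trees -/

/-- Maximally balanced tree with n leaves (for n ≥ 1). -/
def bal : ℕ → FBT
  | 0 => FBT.leaf
  | 1 => FBT.leaf
  | n+2 => FBT.node (bal ((n+2)/2)) (bal ((n+3)/2))
decreasing_by all_goals omega

lemma bal_leaves : ∀ n : ℕ, 1 ≤ n → (bal n).leaves = n := by
  intro n
  induction n using Nat.strong_induction_on with
  | _ n IH =>
    intro hn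
    match n, hn with
    | 1, _ => rw [bal]; rfl
    | (n+2), _ =>
      rw [bal]
      show (bal ((n+2)/2)).leaves + (bal ((n+3)/2)).leaves = n+2
      rw [IH ((n+2)/2) (by omega) (by omega), IH ((n+3)/2) (by omega) (by omega)]
      omega

lemma bal_colless : ∀ n : ℕ, 1 ≤ n → (bal n).colless = Cm n := by
  intro n
  induction n using Nat.strong_induction_on with
  | _ n IH =>
    intro hn
    match n, hn with
    | 1, _ => rw [bal, Cm_one]; rfl
    | (n+2), _ =>
      rw [bal]
      show (bal ((n+2)/2)).colless + (bal ((n+3)/2)).colless +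
        Nat.dist (bal ((n+2)/2)).leaves (bal ((n+3)/2)).leaves = Cm (n+2)
      rw [IH ((n+2)/2) (by omega) (by omega), IH ((n+3)/2) (by omega) (by omega),
        bal_leaves ((n+2)/2) (by omega), bal_leaves ((n+3)/2) (by omega)]
      rw [Cm]
      rw [dist_eq_aux]
      have : (n+2)/2 - (n+3)/2 + ((n+3)/2 - (n+2)/2) = (n+2) % 2 := by omega
      rw [this]

lemma bal_sackin : ∀ n : ℕ, 1 ≤ n → (bal n).sackin = Sm n := by
  intro n
  induction n using Nat.strong_induction_on with
  | _ n IH =>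
    intro hn
    match n, hn with
    | 1, _ => rw [bal, Sm_one]; rfl
    | (n+2), _ =>
      rw [bal]
      show (bal ((n+2)/2)).sackin + (bal ((n+3)/2)).sackin +
        ((bal ((n+2)/2)).leaves + (bal ((n+3)/2)).leaves) = Sm (n+2)
      rw [IH ((n+2)/2) (by omega) (by omega), IH ((n+3)/2) (by omega) (by omega),
        bal_leaves ((n+2)/2) (by omega), bal_leaves ((n+3)/2) (by omega)]
      rw [Sm]
      have : (n+2)/2 + (n+3)/2 = n+2 := by omega
      rw [this]

lemma leaves_pos (T : FBT) : 1 ≤ T.leaves := by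
  induction T with
  | leaf => exact le_refl 1
  | node L R ihL ihR => simp only [FBT.leaves]; omega

lemma sackin_ge (T : FBT) : Sm T.leaves ≤ T.sackin := by
  induction T with
  | leaf => simp [FBT.leaves, FBT.sackin, Sm_one]
  | node L R ihL ihR =>
    simp only [FBT.leaves, FBT.sackin]
    have h := superadd_S L.leaves R.leaves (leaves_pos L) (leaves_pos R)
    omega

lemma colless_ge (T : FBT) : Cm T.leaves ≤ T.colless := by
  induction T with
  | leaf => simp [FBT.leaves, FBT.colless, Cm_one]
  | node L R ihL ihR =>
    simp only [FBT.leaves, FBT.colless]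
    have h := superadd_C L.leaves R.leaves (leaves_pos L) (leaves_pos R)
    omega

lemma minColless_eq (n : ℕ) (hn : 1 ≤ n) : minColless n = Cm n := by
  apply le_antisymm
  · exact Nat.sInf_le ⟨bal n, bal_leaves n hn, bal_colless n hn⟩
  · have hne : {m : ℕ | ∃ T : FBT, T.leaves = n ∧ T.colless = m}.Nonempty :=
      ⟨Cm n, bal n, bal_leaves n hn, bal_colless n hn⟩
    obtain ⟨T0, hl, hc⟩ := Nat.sInf_mem hne
    rw [show minColless n = sInf {m : ℕ | ∃ T : FBT, T.leaves = n ∧ T.colless = m} from rfl,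
      ← hc, ← hl]
    exact colless_ge T0

lemma minSackin_eq (n : ℕ) (hn : 1 ≤ n) : minSackin n = Sm n := by
  apply le_antisymm
  · exact Nat.sInf_le ⟨bal n, bal_leaves n hn, bal_sackin n hn⟩
  · have hne : {m : ℕ | ∃ T : FBT, T.leaves = n ∧ T.sackin = m}.Nonempty :=
      ⟨Sm n, bal n, bal_leaves n hn, bal_sackin n hn⟩
    obtain ⟨T0, hl, hc⟩ := Nat.sInf_mem hne
    rw [show minSackin n = sInf {m : ℕ | ∃ T : FBT, T.leaves = n ∧ T.sackin = m} from rfl,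
      ← hc, ← hl]
    exact sackin_ge T0

lemma main_aux : ∀ T : FBT, T.colless = Cm T.leaves → T.sackin = Sm T.leaves := by
  intro T
  induction T with
  | leaf => intro _; simp [FBT.leaves, FBT.sackin, Sm_one]
  | node L R ihL ihR =>
    intro h
    simp only [FBT.leaves, FBT.colless] at h
    simp only [FBT.leaves, FBT.sackin]
    have ha := leaves_pos L
    have hb := leaves_pos R
    have hCL := colless_ge L
    have hCR := colless_ge R
    have hsup := superadd_C L.leaves R.leaves ha hb
    have heqL : L.colless = Cm L.leaves := by omega
    have heqR : R.colless = Cm R.leaves := by omega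
    have heqd : Cm L.leaves + Cm R.leaves + Nat.dist L.leaves R.leaves
        = Cm (L.leaves + R.leaves) := by omega
    have hm := M (L.leaves + R.leaves) L.leaves R.leaves rfl ha hb
    rw [dist_eq_aux] at heqd
    have hs := superadd_S L.leaves R.leaves ha hb
    rw [ihL heqL, ihR heqR]
    omega

theorem min_colless_implies_min_sackin (T : FBT) (n : ℕ) (hn : T.leaves = n)
    (h : T.colless = minColless n) : T.sackin = minSackin n := by
  have hn1 : 1 ≤ n := by rw [← hn]; exact leaves_pos T
  rw [minColless_eq n hn1] at h
  rw [minSackin_eq n hn1]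
  have := main_aux T (by rw [hn]; exact h)
  rw [this, hn]
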